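/- For any group G and any k ≥ 1, the set FC_k(G) = {x ∈ G : |x|_k is finite} is a subgroup of G. -/
import Mathlib


/-- Left-normed commutator `[a,b] = a⁻¹ b⁻¹ a b`. -/
def cmt {G : Type*} [Group G] (a b : G) : G := a⁻¹ * b⁻¹ * a * b

/-- Iterated left-normed commutator `[a, x₁, ..., x_k]`. -/
def itCmt {G : Type*} [Group G] (a : G) (l : List G) : G := l.foldl cmt a

/-- `Xset a k` is the set of commutators `[a, x₁, ..., x_k]` with `xᵢ ∈ G`. -/
def Xset {G : Type*} [Group G] (a : G) (k : ℕ) : Set G :=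
  {b | ∃ l : List G, l.length = k ∧ itCmt a l = b}

section aux

variable {G : Type*} [Group G]

lemma itCmt_append_singleton (a : G) (l : List G) (g : G) :
    itCmt a (l ++ [g]) = cmt (itCmt a l) g := by
  simp [itCmt, List.foldl_append]

lemma itCmt_one (l : List G) : itCmt (1 : G) l = 1 := by
  induction l with
  | nil => rfl
  | cons g t ih =>
    show List.foldl cmt (cmt 1 g) t = 1
    have : cmt (1 : G) g = 1 := by simp [cmt]
    rw [this]; exact ih

/-- Any conjugate of an element of `Xset a k` (for `k ≥ 1`) is a product `x₁⁻¹ x₂`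
with `x₁, x₂ ∈ Xset a k`. -/
lemma conj_eq_div {a : G} {k : ℕ} (hk : 1 ≤ k) {c : G} (hc : c ∈ Xset a k) (w : G) :
    ∃ x1 ∈ Xset a k, ∃ x2 ∈ Xset a k, w⁻¹ * c * w = x1⁻¹ * x2 := by
  obtain ⟨l, hl, rfl⟩ := hc
  rcases List.eq_nil_or_concat l with rfl | ⟨l', g, rfl⟩
  · simp at hl; omega
  · have hlen : l'.length + 1 = k := by simpa using hl
    refine ⟨itCmt a (l' ++ [w]), ⟨l' ++ [w], by simp [hlen], rfl⟩,
      itCmt a (l' ++ [g * w]), ⟨l' ++ [g * w], by simp [hlen], rfl⟩, ?_⟩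
    rw [List.concat_eq_append, itCmt_append_singleton, itCmt_append_singleton,
      itCmt_append_singleton]
    simp only [cmt]
    group

lemma itCmt_inv (a : G) (l : List G) :
    ∃ w : G, ∃ l' : List G, l'.length = l.length ∧
      itCmt a⁻¹ l = w⁻¹ * (itCmt a l')⁻¹ * w := by
  induction l using List.reverseRecOn with
  | nil => exact ⟨1, [], rfl, by simp [itCmt]⟩
  | append_singleton l g ih =>
    obtain ⟨w, l', hlen, heq⟩ := ih
    refine ⟨(itCmt a l')⁻¹ * w, l' ++ [w * g * w⁻¹], by simp [hlen], ?_⟩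
    rw [itCmt_append_singleton, heq, itCmt_append_singleton]
    simp only [cmt]
    group

lemma itCmt_mul (a b : G) (l : List G) :
    ∃ w : G, ∃ l1 l2 : List G, l1.length = l.length ∧ l2.length = l.length ∧
      itCmt (a * b) l = w⁻¹ * itCmt a l1 * w * itCmt b l2 := by
  induction l using List.reverseRecOn with
  | nil => exact ⟨1, [], [], rfl, rfl, by simp [itCmt]⟩
  | append_singleton l g ih =>
    obtain ⟨w, l1, l2, h1, h2, heq⟩ := ih
    refine ⟨w * itCmt b l2, l1 ++ [w * g * w⁻¹], l2 ++ [g],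
      by simp [h1], by simp [h2], ?_⟩
    rw [itCmt_append_singleton, heq, itCmt_append_singleton, itCmt_append_singleton]
    simp only [cmt]
    group

lemma Xset_inv_finite {a : G} {k : ℕ} (hk : 1 ≤ k) (ha : (Xset a k).Finite) :
    (Xset a⁻¹ k).Finite := by
  refine Set.Finite.subset ((ha.prod ha).image (fun p : G × G => p.1⁻¹ * p.2)) ?_
  rintro y ⟨l, hl, rfl⟩
  obtain ⟨w, l', hlen, heq⟩ := itCmt_inv a l
  have hc : itCmt a l' ∈ Xset a k := ⟨l', by rw [hlen, hl], rfl⟩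
  obtain ⟨x1, hx1, x2, hx2, hconj⟩ := conj_eq_div hk hc w
  refine ⟨(x2, x1), ⟨hx2, hx1⟩, ?_⟩
  have : itCmt a⁻¹ l = (w⁻¹ * itCmt a l' * w)⁻¹ := by rw [heq]; group
  rw [this, hconj]
  group

lemma Xset_mul_finite {a b : G} {k : ℕ} (hk : 1 ≤ k) (ha : (Xset a k).Finite)
    (hb : (Xset b k).Finite) : (Xset (a * b) k).Finite := by
  refine Set.Finite.subset ((ha.prod (ha.prod hb)).image
    (fun p : G × G × G => p.1⁻¹ * p.2.1 * p.2.2)) ?_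
  rintro y ⟨l, hl, rfl⟩
  obtain ⟨w, l1, l2, h1, h2, heq⟩ := itCmt_mul a b l
  have hc : itCmt a l1 ∈ Xset a k := ⟨l1, by rw [h1, hl], rfl⟩
  have hd : itCmt b l2 ∈ Xset b k := ⟨l2, by rw [h2, hl], rfl⟩
  obtain ⟨x1, hx1, x2, hx2, hconj⟩ := conj_eq_div hk hc w
  refine ⟨(x1, x2, itCmt b l2), ⟨hx1, hx2, hd⟩, ?_⟩
  show x1⁻¹ * x2 * itCmt b l2 = _
  rw [← hconj, heq]

end aux

theorem stmt_8 {G : Type*} [Group G] (k : ℕ) (hk : 1 ≤ k) :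
    ∃ H : Subgroup G, (H : Set G) = {x : G | (Xset x k).Finite} := by
  refine ⟨{ carrier := {x : G | (Xset x k).Finite}
            one_mem' := ?_
            mul_mem' := ?_
            inv_mem' := ?_ }, rfl⟩
  · intro a b ha hb
    exact Xset_mul_finite hk ha hb
  · have : Xset (1 : G) k ⊆ {1} := by
      rintro y ⟨l, hl, rfl⟩
      simp [itCmt_one]
    exact (Set.finite_singleton 1).subset this
  · intro a ha
    exact Xset_inv_finite hk ha
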